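/- arXiv:math/0303195 — 3 statements merged into one kernel-verified Lean document; each statement's English description precedes it below -/
import Mathlib

section
/- Let Q(x,y) = -||x||² + ||y||² be a quadratic form on ℝᵏ × ℝ^(n-k), and let w be a C¹ vector field defined near (0,0) such that Q'(z)(w(z)) > 0 for every z ≠ (0,0) in a neighborhood of the origin. Then w(0,0) = 0. -/
open scoped RealInnerProductSpace Topology
open Filter

/-- Let `Q(x,y) = -‖x‖² + ‖y‖²` on `ℝᵏ × ℝᵐ` (with `m = n - k`), and let
`w` be a `C¹` vector field defined on an open neighborhood `U` of the origin such that
`Q'(z)(w z) > 0` for every `z ≠ (0,0)` in `U`. Then `w (0,0) = 0`. -/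
theorem stmt0 (k m : ℕ)
    (Q : EuclideanSpace ℝ (Fin k) × EuclideanSpace ℝ (Fin m) → ℝ)
    (hQ : ∀ z : EuclideanSpace ℝ (Fin k) × EuclideanSpace ℝ (Fin m),
      Q z = -‖z.1‖ ^ 2 + ‖z.2‖ ^ 2)
    (U : Set (EuclideanSpace ℝ (Fin k) × EuclideanSpace ℝ (Fin m)))
    (hU : IsOpen U) (h0 : ((0, 0) : EuclideanSpace ℝ (Fin k) × EuclideanSpace ℝ (Fin m)) ∈ U)
    (w : EuclideanSpace ℝ (Fin k) × EuclideanSpace ℝ (Fin m) →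
      EuclideanSpace ℝ (Fin k) × EuclideanSpace ℝ (Fin m))
    (hw : ContDiffOn ℝ 1 w U)
    (hpos : ∀ z ∈ U, z ≠ ((0, 0) : EuclideanSpace ℝ (Fin k) × EuclideanSpace ℝ (Fin m)) →
      0 < fderiv ℝ Q z (w z)) :
    w (0, 0) = 0 := by
  by_contra hne
  set v : EuclideanSpace ℝ (Fin k) × EuclideanSpace ℝ (Fin m) := w (0, 0) with hv
  -- derivative formula
  have key : ∀ z : EuclideanSpace ℝ (Fin k) × EuclideanSpace ℝ (Fin m), fderiv ℝ Q z (w z)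
      = -(2 * ⟪z.1, (w z).1⟫) + 2 * ⟪z.2, (w z).2⟫ := by
    intro z
    have hfd : HasFDerivAt Q
        (-(2 • (innerSL ℝ z.1).comp (ContinuousLinearMap.fst ℝ _ _))
          + 2 • (innerSL ℝ z.2).comp (ContinuousLinearMap.snd ℝ _ _)) z := by
      have h1 : HasFDerivAt
          (fun z : EuclideanSpace ℝ (Fin k) × EuclideanSpace ℝ (Fin m) =>
            -‖z.1‖ ^ 2 + ‖z.2‖ ^ 2)
          (-(2 • (innerSL ℝ z.1).comp (ContinuousLinearMap.fst ℝ _ _))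
            + 2 • (innerSL ℝ z.2).comp (ContinuousLinearMap.snd ℝ _ _)) z :=
        ((hasFDerivAt_fst (p := z)).norm_sq).neg.add ((hasFDerivAt_snd (p := z)).norm_sq)
      exact h1.congr_of_eventuallyEq (Filter.Eventually.of_forall fun x => (hQ x))
    rw [hfd.fderiv]
    simp [two_smul]
    ring
  set u : EuclideanSpace ℝ (Fin k) × EuclideanSpace ℝ (Fin m) := (v.1, -v.2) with hu
  have hune : u ≠ 0 := by
    intro h
    apply hne
    have h1 : v.1 = 0 := congrArg Prod.fst h
    have h2 : -v.2 = 0 := congrArg Prod.snd h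
    have h2' : v.2 = 0 := by simpa using h2
    show v = 0
    exact Prod.ext h1 h2'
  have hcu : Continuous fun t : ℝ => t • u := continuous_id.smul continuous_const
  have hzero : (fun t : ℝ => t • u) 0
      = ((0, 0) : EuclideanSpace ℝ (Fin k) × EuclideanSpace ℝ (Fin m)) := by simp; rfl
  -- eventually t • u ∈ U
  have hUev : ∀ᶠ t in 𝓝 (0 : ℝ), t • u ∈ U := by
    have : (fun t : ℝ => t • u) ⁻¹' U ∈ 𝓝 (0 : ℝ) :=
      (hU.preimage hcu).mem_nhds (by rw [Set.mem_preimage]; rw [show (0:ℝ) • u = _ from hzero]; exact h0)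
    exact this
  -- eventually negative inner product
  have hev : ∀ᶠ t in 𝓝[>] (0 : ℝ),
      ⟪v.1, (w (t • u)).1⟫ + ⟪v.2, (w (t • u)).2⟫ < 0 := by
    filter_upwards [hUev.filter_mono nhdsWithin_le_nhds, self_mem_nhdsWithin] with t htU ht
    have htpos : (0 : ℝ) < t := ht
    have hz0 : t • u ≠ ((0, 0) : EuclideanSpace ℝ (Fin k) × EuclideanSpace ℝ (Fin m)) := by
      intro h
      have h' : t • u = (0 : EuclideanSpace ℝ (Fin k) × EuclideanSpace ℝ (Fin m)) := h
      rcases smul_eq_zero.1 h' with h'' | h''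
      · exact htpos.ne' h''
      · exact hune h''
    have hp := hpos _ htU hz0
    rw [key] at hp
    have e1 : (t • u).1 = t • v.1 := rfl
    have e2 : (t • u).2 = t • (-v.2) := rfl
    rw [e1, e2, real_inner_smul_left, real_inner_smul_left] at hp
    have e3 : ⟪-v.2, (w (t • u)).2⟫ = -⟪v.2, (w (t • u)).2⟫ := by
      simp [inner_neg_left]
    rw [e3] at hp
    nlinarith [hp]
  -- continuity and limit
  have hcw : ContinuousAt w ((0, 0) : EuclideanSpace ℝ (Fin k) × EuclideanSpace ℝ (Fin m)) :=
    hw.continuousOn.continuousAt (hU.mem_nhds h0)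
  have hlim : Tendsto (fun t : ℝ => ⟪v.1, (w (t • u)).1⟫ + ⟪v.2, (w (t • u)).2⟫)
      (𝓝[>] (0 : ℝ)) (𝓝 (⟪v.1, v.1⟫ + ⟪v.2, v.2⟫)) := by
    have h1 : Tendsto (fun t : ℝ => w (t • u)) (𝓝 (0 : ℝ)) (𝓝 v) := by
      have h2 : Tendsto (fun t : ℝ => t • u) (𝓝 (0 : ℝ))
          (𝓝 ((0, 0) : EuclideanSpace ℝ (Fin k) × EuclideanSpace ℝ (Fin m))) := by
        rw [← hzero]; exact hcu.continuousAt
      exact (hcw.tendsto).comp h2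
    have c1 : Continuous fun p : EuclideanSpace ℝ (Fin k) × EuclideanSpace ℝ (Fin m) =>
        ⟪v.1, p.1⟫ + ⟪v.2, p.2⟫ :=
      (continuous_const.inner continuous_fst).add (continuous_const.inner continuous_snd)
    exact ((c1.continuousAt.tendsto).comp h1).mono_left nhdsWithin_le_nhds
  have hle : ⟪v.1, v.1⟫ + ⟪v.2, v.2⟫ ≤ 0 := by
    refine le_of_tendsto hlim ?_
    filter_upwards [hev] with t ht using ht.le
  -- contradiction
  have hvne : v ≠ 0 := hne
  have hcase : v.1 ≠ 0 ∨ v.2 ≠ 0 := by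
    by_contra h
    push_neg at h
    exact hvne (Prod.ext h.1 h.2)
  have n1 : (0 : ℝ) ≤ ⟪v.1, v.1⟫ := real_inner_self_nonneg
  have n2 : (0 : ℝ) ≤ ⟪v.2, v.2⟫ := real_inner_self_nonneg
  rcases hcase with h' | h'
  · have : (0 : ℝ) < ⟪v.1, v.1⟫ := by
      rw [real_inner_self_eq_norm_sq]
      have := norm_pos_iff.2 h'
      positivity
    linarith
  · have : (0 : ℝ) < ⟪v.2, v.2⟫ := by
      rw [real_inner_self_eq_norm_sq]
      have := norm_pos_iff.2 h'
      positivity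
    linarith
end

section
/- Let f be a smooth function on an open set of ℝⁿ and v a smooth vector field vanishing at a point p. Define φ(x) = f'(x)(v(x)). Then the second derivative of φ at p satisfies φ''(p)(h,k) = f''(p)(v'(p)h, k) + f''(p)(v'(p)k, h) for all tangent vectors h, k. -/
open Asymptotics

/-- If `B` is bilinear, `f` continuous at `p`, `g` differentiable at `p` with `g p = 0`,
then `x ↦ B (f x) (g x)` is differentiable at `p` with derivative `(B (f p)).comp g'`. -/
lemma aux_bilin {E F G H : Type*} [NormedAddCommGroup E] [NormedSpace ℝ E]
    [NormedAddCommGroup F] [NormedSpace ℝ F] [NormedAddCommGroup G] [NormedSpace ℝ G]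
    [NormedAddCommGroup H] [NormedSpace ℝ H]
    (B : F →L[ℝ] G →L[ℝ] H) {f : E → F} {g : E → G} {g' : E →L[ℝ] G} {p : E}
    (hf : ContinuousAt f p) (hg : HasFDerivAt g g' p) (h0 : g p = 0) :
    HasFDerivAt (fun x => B (f x) (g x)) ((B (f p)).comp g') p := by
  rw [hasFDerivAt_iff_isLittleO_nhds_zero] at hg ⊢
  rw [h0] at hg
  simp only [sub_zero] at hg
  simp only [h0, map_zero, ContinuousLinearMap.zero_apply, sub_zero,
    ContinuousLinearMap.coe_comp', Function.comp_apply]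
  have hgO : (fun h : E => g (p + h)) =O[nhds 0] (fun h => h) := by
    have h2 : (fun h : E => g' h) =O[nhds 0] (fun h => h) := g'.isBigO_comp _ _
    exact (hg.isBigO.add h2).congr_left fun h => by rw [sub_add_cancel]
  have hf1 : (fun h : E => f (p + h) - f p) =o[nhds 0] (fun _ => (1 : ℝ)) := by
    rw [isLittleO_one_iff]
    have h1 : Filter.Tendsto (fun h : E => p + h) (nhds 0) (nhds p) := by
      simpa using ((continuous_add_left p).tendsto (0 : E))
    simpa using (hf.tendsto.comp h1).sub_const (f p)
  have term1 : (fun h : E => B (f (p + h) - f p) (g (p + h))) =o[nhds 0] (fun h => h) := by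
    have hbound : (fun h : E => B (f (p + h) - f p) (g (p + h))) =O[nhds 0]
        (fun h : E => ‖f (p + h) - f p‖ * ‖g (p + h)‖) := by
      apply IsBigO.of_bound ‖B‖
      filter_upwards with h
      calc ‖B (f (p + h) - f p) (g (p + h))‖
          ≤ ‖B (f (p + h) - f p)‖ * ‖g (p + h)‖ := ContinuousLinearMap.le_opNorm _ _
        _ ≤ ‖B‖ * ‖f (p + h) - f p‖ * ‖g (p + h)‖ := by
            gcongr; exact ContinuousLinearMap.le_opNorm _ _
        _ = ‖B‖ * ‖‖f (p + h) - f p‖ * ‖g (p + h)‖‖ := by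
            rw [Real.norm_of_nonneg (by positivity)]; ring
    have hprod : (fun h : E => ‖f (p + h) - f p‖ * ‖g (p + h)‖) =o[nhds 0]
        (fun h : E => (1 : ℝ) * ‖h‖) := hf1.norm_left.mul_isBigO hgO.norm_norm
    refine hbound.trans_isLittleO (hprod.trans_isBigO ?_)
    simpa using (isBigO_refl (fun h : E => h) (nhds 0)).norm_left
  have term2 : (fun h : E => B (f p) (g (p + h) - g' h)) =o[nhds 0] (fun h => h) :=
    ((B (f p)).isBigO_comp _ _).trans_isLittleO hg
  refine (term1.add term2).congr_left fun h => ?_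
  simp only [map_sub, ContinuousLinearMap.sub_apply, ContinuousLinearMap.map_sub]
  abel

set_option maxHeartbeats 1000000 in
/-- If `f` is C², `v` is a C¹ vector field with `v p = 0`, `p` a critical point
of `f`, and `φ x = f'(x)(v x)`, then `φ''(p)(h,k) = f''(p)(v'(p)h, k) + f''(p)(v'(p)k, h)`. -/
theorem stmt1 (n : ℕ) (f : EuclideanSpace ℝ (Fin n) → ℝ)
    (v : EuclideanSpace ℝ (Fin n) → EuclideanSpace ℝ (Fin n))
    (p : EuclideanSpace ℝ (Fin n))
    (hf : ContDiff ℝ 2 f) (hv : ContDiff ℝ 1 v)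
    (hvp : v p = 0) (hfp : fderiv ℝ f p = 0) :
    ∀ h k : EuclideanSpace ℝ (Fin n),
      fderiv ℝ (fderiv ℝ (fun x => fderiv ℝ f x (v x))) p h k =
        fderiv ℝ (fderiv ℝ f) p (fderiv ℝ v p h) k +
          fderiv ℝ (fderiv ℝ f) p (fderiv ℝ v p k) h := by
  intro h k
  let E := EuclideanSpace ℝ (Fin n)
  have hf' : ContDiff ℝ 1 (fderiv ℝ f) := hf.fderiv_right (le_refl _)
  have hF : HasFDerivAt (fderiv ℝ f) (fderiv ℝ (fderiv ℝ f) p) p :=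
    (hf'.differentiable one_ne_zero p).hasFDerivAt
  set F2 := fderiv ℝ (fderiv ℝ f) with hF2
  have hphi : fderiv ℝ (fun x => fderiv ℝ f x (v x)) =
      fun x => ((ContinuousLinearMap.compL ℝ E E ℝ).flip (fderiv ℝ v x)) (fderiv ℝ f x) +
        ((ContinuousLinearMap.flipₗᵢ ℝ E E ℝ).toLinearIsometry.toContinuousLinearMap (F2 x)) (v x) := by
    funext x
    rw [fderiv_clm_apply (hf'.differentiable one_ne_zero x) (hv.differentiable one_ne_zero x)]
    rfl
  set B1 : (E →L[ℝ] E →L[ℝ] ℝ) →L[ℝ] E →L[ℝ] (E →L[ℝ] ℝ) :=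
    (ContinuousLinearMap.flipₗᵢ ℝ E E ℝ).toLinearIsometry.toContinuousLinearMap with hB1
  set B2 : (E →L[ℝ] E) →L[ℝ] (E →L[ℝ] ℝ) →L[ℝ] (E →L[ℝ] ℝ) :=
    (ContinuousLinearMap.compL ℝ E E ℝ).flip with hB2
  have hc2 : ContinuousAt (fderiv ℝ v) p := (hv.continuous_fderiv one_ne_zero).continuousAt
  have hc1 : ContinuousAt F2 p := (hf'.continuous_fderiv one_ne_zero).continuousAt
  have haux2 : HasFDerivAt (fun x => B2 (fderiv ℝ v x) (fderiv ℝ f x))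
      ((B2 (fderiv ℝ v p)).comp (F2 p)) p := aux_bilin B2 hc2 hF hfp
  have hvd : HasFDerivAt v (fderiv ℝ v p) p := (hv.differentiable one_ne_zero p).hasFDerivAt
  have haux1 : HasFDerivAt (fun x => B1 (F2 x) (v x))
      ((B1 (F2 p)).comp (fderiv ℝ v p)) p := by
    apply aux_bilin B1 (f := F2) (by exact hc1) hvd hvp
  have key : fderiv ℝ (fderiv ℝ (fun x => fderiv ℝ f x (v x))) p =
      (B2 (fderiv ℝ v p)).comp (F2 p) + (B1 (F2 p)).comp (fderiv ℝ v p) := by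
    rw [hphi]
    exact (haux2.add haux1).fderiv
  rw [key]
  have hsymm : ∀ a b, F2 p a b = F2 p b a := hf.contDiffAt.isSymmSndFDerivAt (by norm_num)
  have e1 : ((B2 (fderiv ℝ v p)).comp (F2 p) + (B1 (F2 p)).comp (fderiv ℝ v p)) h k
      = F2 p h (fderiv ℝ v p k) + F2 p k (fderiv ℝ v p h) := rfl
  rw [e1, hsymm h (fderiv ℝ v p k), hsymm k (fderiv ℝ v p h)]
  exact add_comm _ _
end

section
/- Let A be a Morse matrix condition: suppose B is a symmetric nondegenerate n×n real matrix and L is an n×n real matrix such that ⟨B·L·h, h⟩ > 0 for all nonzero h ∈ ℝⁿ. Then L has no purely imaginary eigenvalues and no zero eigenvalue (L is a hyperbolic matrix). -/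
/-- If `B` is a symmetric nondegenerate real matrix and `L` satisfies
`⟨B L h, h⟩ > 0` for all `h ≠ 0`, then `L` is hyperbolic: every complex eigenvalue `μ`
of `L` has `Re μ ≠ 0` (in particular no purely imaginary and no zero eigenvalues). -/
theorem stmt8 (n : ℕ) (B L : Matrix (Fin n) (Fin n) ℝ)
    (hB : B.IsSymm) (hBinv : IsUnit B.det)
    (hpos : ∀ h : Fin n → ℝ, h ≠ 0 → 0 < dotProduct ((B * L).mulVec h) h)
    (μ : ℂ)
    (hμ : Module.End.HasEigenvalue (Matrix.toLin' (L.map (algebraMap ℝ ℂ))) μ) :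
    μ.re ≠ 0 := by
  intro hre
  obtain ⟨v, hv⟩ := hμ.exists_hasEigenvector
  have hmv : (L.map (algebraMap ℝ ℂ)).mulVec v = μ • v := by
    rw [← Matrix.toLin'_apply]; exact hv.apply_eq_smul
  set a : Fin n → ℝ := fun i => (v i).re with ha_def
  set b : Fin n → ℝ := fun i => (v i).im with hb_def
  have ha : L.mulVec a = (-μ.im) • b := by
    funext i
    have h := congrArg (fun w => (w i).re) hmv
    simp only [Matrix.mulVec, dotProduct, Pi.smul_apply, smul_eq_mul,
      Complex.re_sum, Matrix.map_apply, Complex.mul_re, Complex.ofReal_re,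
      Complex.ofReal_im, algebraMap.coe_smul] at h ⊢
    rw [hre] at h
    simpa [Matrix.mulVec, dotProduct, Complex.ofReal_re, Complex.ofReal_im] using h
  have hb : L.mulVec b = μ.im • a := by
    funext i
    have h := congrArg (fun w => (w i).im) hmv
    simp only [Matrix.mulVec, dotProduct, Pi.smul_apply, smul_eq_mul,
      Complex.im_sum, Matrix.map_apply, Complex.mul_im] at h ⊢
    rw [hre] at h
    simpa [Matrix.mulVec, dotProduct] using h
  -- symmetry of B
  have hsym : ∀ x y : Fin n → ℝ,
      dotProduct (B.mulVec x) y = dotProduct (B.mulVec y) x := by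
    intro x y
    rw [dotProduct_comm, Matrix.dotProduct_mulVec, ← Matrix.mulVec_transpose, hB.eq]
  have hsum0 : dotProduct ((B * L).mulVec a) a
      + dotProduct ((B * L).mulVec b) b = 0 := by
    rw [← Matrix.mulVec_mulVec, ← Matrix.mulVec_mulVec, ha, hb,
      Matrix.mulVec_smul, Matrix.mulVec_smul, smul_dotProduct,
      smul_dotProduct, hsym a b, smul_eq_mul, smul_eq_mul]
    ring
  have hv0 : a ≠ 0 ∨ b ≠ 0 := by
    by_contra h
    push_neg at h
    apply hv.2
    funext i
    have h1 := congrFun h.1 i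
    have h2 := congrFun h.2 i
    simp only [ha_def, hb_def, Pi.zero_apply] at h1 h2
    exact Complex.ext h1 h2
  have hz : ∀ x : Fin n → ℝ, 0 ≤ dotProduct ((B * L).mulVec x) x := by
    intro x
    rcases eq_or_ne x 0 with rfl | hx
    · simp
    · exact (hpos x hx).le
  rcases hv0 with h | h
  · have := hpos a h
    have := hz b
    linarith
  · have := hpos b h
    have := hz a
    linarith
end
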